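/- Let g ∈ ℤ[X] be primitive, and let a ∈ ℤ, b ∈ ℕ with b ≥ 1 and gcd(a, b) = 1. Then the polynomial f = (a/b) · g ∈ ℚ[X] maps ℤ into ℤ (i.e., f ∈ Int(ℤ)) if and only if b divides the fixed divisor d(g). -/

import Mathlib

open Polynomial

/-- The ring of integer-valued polynomials `Int(ℤ) = {f ∈ ℚ[X] | f(ℤ) ⊆ ℤ}`,
as a subring of ℚ[X]. -/
noncomputable def IntValued : Subring (Polynomial ℚ) where
  carrier := {f | ∀ c : ℤ, ∃ m : ℤ, f.eval (c : ℚ) = (m : ℚ)}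
  zero_mem' := fun c => ⟨0, by simp⟩
  one_mem' := fun c => ⟨1, by simp⟩
  add_mem' := by
    rintro f g hf hg c
    obtain ⟨m, hm⟩ := hf c
    obtain ⟨n, hn⟩ := hg c
    exact ⟨m + n, by simp [hm, hn]⟩
  mul_mem' := by
    rintro f g hf hg c
    obtain ⟨m, hm⟩ := hf c
    obtain ⟨n, hn⟩ := hg c
    exact ⟨m * n, by simp [hm, hn]⟩
  neg_mem' := by
    rintro f hf c
    obtain ⟨m, hm⟩ := hf c
    exact ⟨-m, by simp [hm]⟩

/-- The fixed divisor `d(f)` of `f ∈ ℤ[X]`: the nonnegative generator of the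
ideal of ℤ generated by the image `f(ℤ)`. -/
noncomputable def fixedDivisor (f : Polynomial ℤ) : ℕ :=
  (@Submodule.IsPrincipal.generator ℤ ℤ _ _ _
    (Ideal.span (Set.range fun c : ℤ => f.eval c))
    (IsPrincipalIdealRing.principal _)).natAbs


lemma dvd_fd_iff (g : Polynomial ℤ) (b : ℕ) :
    b ∣ fixedDivisor g ↔ ∀ c : ℤ, (b : ℤ) ∣ g.eval c := by
  constructor
  · intro h c
    have h1 : (@Submodule.IsPrincipal.generator ℤ ℤ _ _ _
      (Ideal.span (Set.range fun c : ℤ => g.eval c))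
      (IsPrincipalIdealRing.principal _)) ∣ g.eval c := by
      rw [← Submodule.IsPrincipal.mem_iff_generator_dvd]
      exact Ideal.subset_span ⟨c, rfl⟩
    exact dvd_trans (Int.natCast_dvd_natCast.mpr h) ((Int.natAbs_dvd).mpr h1)
  · intro h
    unfold fixedDivisor
    rw [← Int.natCast_dvd_natCast, Int.dvd_natAbs]
    have h2 : Ideal.span (Set.range fun c : ℤ => g.eval c) ≤ Ideal.span {(b:ℤ)} := by
      rw [Ideal.span_le]
      rintro x ⟨c, rfl⟩
      exact Ideal.mem_span_singleton.mpr (h c)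
    have := h2 (Submodule.IsPrincipal.generator_mem _)
    exact Ideal.mem_span_singleton.mp this

/-- Remark 1 (ii): for primitive `g ∈ ℤ[X]` and coprime `a ∈ ℤ`, `b ∈ ℕ`, `b ≥ 1`,
the polynomial `(a/b)·g` is integer-valued iff `b` divides the fixed divisor `d(g)`. -/
theorem intValued_iff_dvd_fixedDivisor (g : Polynomial ℤ) (hg : g.IsPrimitive)
    (a : ℤ) (b : ℕ) (hb : 1 ≤ b) (hab : Int.gcd a b = 1) :
    (Polynomial.C ((a : ℚ) / (b : ℚ)) * g.map (Int.castRingHom ℚ)) ∈ IntValued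
      ↔ b ∣ fixedDivisor g := by
  have hb0 : (b : ℚ) ≠ 0 := by positivity
  rw [dvd_fd_iff]
  have key : ∀ c : ℤ,
      (∃ m : ℤ, (Polynomial.C ((a : ℚ) / (b : ℚ)) * g.map (Int.castRingHom ℚ)).eval (c : ℚ)
        = (m : ℚ)) ↔ (b : ℤ) ∣ g.eval c := by
    intro c
    rw [Polynomial.eval_mul, Polynomial.eval_C, Polynomial.eval_intCast_map]
    simp only [eq_intCast, Int.cast_id]
    constructor
    · rintro ⟨m, hm⟩
      have : (a * g.eval c : ℚ) = (m * b : ℚ) := by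
        field_simp at hm
        push_cast
        linarith [hm]
      have h2 : a * g.eval c = m * b := by exact_mod_cast this
      have hba : (b : ℤ) ∣ a * g.eval c := ⟨m, by linarith⟩
      exact Int.dvd_of_dvd_mul_right_of_gcd_one hba (by rw [Int.gcd_comm]; exact hab)
    · rintro ⟨m, hm⟩
      refine ⟨a * m, ?_⟩
      rw [hm]
      push_cast
      field_simp
  constructor
  · intro h c; exact (key c).mp (h c)
  · intro h c; exact (key c).mpr (h c)
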